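/- Define A(l,d) for integers by A(l,0) = 0, A(l,d) = 2^l − 1 for d ≥ l ≥ 0, and A(l,d) = A(l−1,d−1)+A(l−1,d)+1 for l > d > 0. Then for all l ≥ d ≥ 0 with l > 0, it holds that A(l,d) ≤ l^d. -/
import Mathlib


/-- The recursively defined function `A`: `A(l,0) = 0`, `A(l,d) = 2^l − 1` for `d ≥ l`,
and `A(l,d) = A(l−1,d−1) + A(l−1,d) + 1` for `l > d > 0`. -/
def Arec : ℕ → ℕ → ℕ
  | 0, _ => 0
  | _, 0 => 0
  | l + 1, d + 1 =>
    if l + 1 ≤ d + 1 then 2 ^ (l + 1) - 1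
    else Arec l d + Arec l (d + 1) + 1

lemma Arec_zero (l : ℕ) : Arec l 0 = 0 := by cases l <;> simp [Arec]

lemma Arec_succ (l d : ℕ) (h : d + 1 < l + 1) :
    Arec (l + 1) (d + 1) = Arec l d + Arec l (d + 1) + 1 := by
  simp only [Arec, if_neg (by omega : ¬ l + 1 ≤ d + 1)]

/-- For `l ≥ d ≥ 0` with `l > 0`, it holds that `A(l,d) ≤ l^d`. -/
theorem Arec_le_pow (l d : ℕ) (hdl : d ≤ l) (hl : 0 < l) : Arec l d ≤ l ^ d := by
  induction l generalizing d with
  | zero => omega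
  | succ l ih =>
    match d with
    | 0 => simp [Arec_zero]
    | d + 1 =>
      by_cases h : l + 1 ≤ d + 1
      · have he : Arec (l + 1) (d + 1) = 2 ^ (l + 1) - 1 := by
          simp only [Arec, if_pos h]
        rw [he]
        have hd : d = l := by omega
        rcases Nat.eq_zero_or_pos l with hl0 | hl'
        · subst hd; subst hl0; norm_num
        · have : 2 ^ (l + 1) ≤ (l + 1) ^ (d + 1) := by
            rw [hd]; exact Nat.pow_le_pow_left (by omega) _
          omega
      · rw [Arec_succ l d (by omega)]
        have hl' : 0 < l := by omega
        have h2 : Arec l (d + 1) ≤ l ^ (d + 1) := ih (d + 1) (by omega) hl'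
        rcases Nat.eq_zero_or_pos d with rfl | hd
        · have : Arec l 0 = 0 := Arec_zero l
          have hle : l ^ 1 ≤ (l + 1) ^ 1 := by simp
          simp only [zero_add, pow_one] at h2 hle ⊢
          omega
        · have h1 : Arec l d ≤ l ^ d := ih d (by omega) hl'
          have hp : l ^ d < (l + 1) ^ d := Nat.pow_lt_pow_left (by omega) (by omega)
          have e1 : (l + 1) ^ (d + 1) = (l + 1) ^ d * (l + 1) := pow_succ _ _
          have e2 : l ^ (d + 1) = l ^ d * l := pow_succ _ _
          nlinarith [h1, h2, hp]
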